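/- arXiv:2301.11974 — 2 statements merged into one kernel-verified Lean document; each statement's English description precedes it below -/
import Mathlib

section
/- Let s ∈ ℝ^p be a reference point with s_k < z_k(x) for all x ∈ X and all k, and let x* ∈ X be efficient. Define weights w_k = 1 / (z_k(x*) − s_k) > 0 for k = 1,…,p. Then x* minimizes the weighted Tchebycheff scalarization x ↦ max_{k=1,…,p} w_k (z_k(x) − s_k) over X; i.e., every efficient solution can be obtained as an optimal solution of a weighted Tchebycheff scalarization for a suitable choice of weights. -/
/-- Let the reference point `s` satisfy `s_k < z_k(x)` for all `x ∈ X` and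
all `k`, and let `x* ∈ X` be efficient.  With the weights `w_k = 1 / (z_k(x*) - s_k)`,
the solution `x*` minimizes the weighted Tchebycheff scalarization
`x ↦ max_k w_k (z_k(x) - s_k)` over `X`. -/
theorem efficient_is_weighted_tchebycheff_optimal {α : Type*}
    (X : Finset α) (hX : X.Nonempty) (p : ℕ) (hp : 2 ≤ p)
    (z : α → Fin p → ℝ) (s : Fin p → ℝ) (hs : ∀ x ∈ X, ∀ k, s k < z x k)
    (xstar : α) (hxstar : xstar ∈ X)
    (heff : ¬ ∃ xhat ∈ X, (∀ k, z xhat k ≤ z xstar k) ∧ z xhat ≠ z xstar) :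
    ∀ x ∈ X,
      (Finset.univ.sup' (Finset.univ_nonempty_iff.mpr ⟨⟨0, by omega⟩⟩)
        fun k => (1 / (z xstar k - s k)) * (z xstar k - s k)) ≤
      (Finset.univ.sup' (Finset.univ_nonempty_iff.mpr ⟨⟨0, by omega⟩⟩)
        fun k => (1 / (z xstar k - s k)) * (z x k - s k)) := by
  intro x hx
  have hpos : ∀ k, 0 < z xstar k - s k := fun k => sub_pos.mpr (hs xstar hxstar k)
  have hL : (Finset.univ.sup' (Finset.univ_nonempty_iff.mpr ⟨⟨0, by omega⟩⟩)
      fun k => (1 / (z xstar k - s k)) * (z xstar k - s k)) ≤ 1 := by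
    apply Finset.sup'_le
    intro k _
    rw [one_div_mul_cancel (ne_of_gt (hpos k))]
  refine le_trans hL ?_
  by_contra h
  push_neg at h
  rw [Finset.sup'_lt_iff] at h
  apply heff
  refine ⟨x, hx, ?_, ?_⟩
  · intro k
    have := h k (Finset.mem_univ k)
    rw [div_mul_eq_mul_div, one_mul, div_lt_one (hpos k)] at this
    linarith
  · intro hzeq
    have := h ⟨0, by omega⟩ (Finset.mem_univ _)
    rw [hzeq, one_div_mul_cancel (ne_of_gt (hpos _))] at this
    exact lt_irrefl _ this
end

section
/- Correctness of fathoming by dominance: let Y ⊆ ℝ^p be a nonempty finite set with nondominated set Y_N, let Y' ⊆ Y be the image set of a subproblem, let L ⊆ ℝ^p be a lower bound set for Y' in the sense that for every y ∈ Y' there exists l ∈ L with l ≦ y, and let U ⊆ Y be an incumbent set such that for every l ∈ L there exists u ∈ U with u ≦ l. Then Y' ∩ Y_N ⊆ U; i.e., the subproblem contains no nondominated point that is not already in the incumbent list, so the corresponding node can be fathomed. -/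
/-- correctness of fathoming by dominance: let `Y ⊆ ℝ^p` be a nonempty
finite set with nondominated set `Y_N`, `Y' ⊆ Y` the image set of a subproblem,
`L` a lower bound set for `Y'` (every `y ∈ Y'` is weakly dominated by some `l ∈ L`),
and `U ⊆ Y` an incumbent set such that every `l ∈ L` is weakly dominated by some
`u ∈ U`.  Then `Y' ∩ Y_N ⊆ U`. -/
theorem fathoming_by_dominance (p : ℕ) (hp : 2 ≤ p)
    (Y : Finset (Fin p → ℝ)) (hY : Y.Nonempty)
    (Y' : Set (Fin p → ℝ)) (hY' : Y' ⊆ ↑Y)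
    (L U : Set (Fin p → ℝ)) (hU : U ⊆ ↑Y)
    (hL : ∀ y ∈ Y', ∃ l ∈ L, ∀ k, l k ≤ y k)
    (hLU : ∀ l ∈ L, ∃ u ∈ U, ∀ k, u k ≤ l k) :
    Y' ∩ {y | y ∈ Y ∧ ¬ ∃ y' ∈ Y, (∀ k, y' k ≤ y k) ∧ y' ≠ y} ⊆ U := by
  intro y hy
  obtain ⟨hy', hyY, hnd⟩ := hy
  obtain ⟨l, hl, hly⟩ := hL y hy'
  obtain ⟨u, hu, hul⟩ := hLU l hl
  have huy : ∀ k, u k ≤ y k := fun k => le_trans (hul k) (hly k)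
  by_cases h : u = y
  · exact h ▸ hu
  · exact absurd ⟨u, hU hu, huy, h⟩ hnd
end
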